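/- Let φ be proper convex lower semicontinuous on ℝ^n, and F(x) = (1/(2λ))‖x−z‖² − env_α φ(Bx). If λ < α/‖B‖² then F is strictly convex on ℝ^d; if λ = α/‖B‖² then F is convex. -/

import Mathlib

set_option maxHeartbeats 1000000

open RealInnerProductSpace

section aux

variable {F : Type*} [NormedAddCommGroup F] [InnerProductSpace ℝ F]

lemma aux_combo (t s : ℝ) (h : t + s = 1) (x y : F) :
    ‖t • x + s • y‖ ^ 2 = t * ‖x‖ ^ 2 + s * ‖y‖ ^ 2 - t * s * ‖x - y‖ ^ 2 := by
  obtain rfl : s = 1 - t := by linarith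
  simp only [← real_inner_self_eq_norm_sq, inner_add_add_self, inner_sub_sub_self,
    real_inner_smul_left, real_inner_smul_right]
  ring

lemma aux_affine_minorant {E : Type*} [NormedAddCommGroup E] [NormedSpace ℝ E]
    (φ : E → ℝ) (hconv : ConvexOn ℝ Set.univ φ) (hlsc : LowerSemicontinuous φ) :
    ∃ (L : E →L[ℝ] ℝ) (c : ℝ), ∀ w, L w + c ≤ φ w := by
  have hepi_cl : IsClosed {p : E × ℝ | φ p.1 ≤ p.2} := by
    have h1 : LowerSemicontinuous fun p : E × ℝ => φ p.1 :=
      hlsc.comp continuous_fst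
    have h2 : LowerSemicontinuous fun p : E × ℝ => -p.2 :=
      (continuous_snd.neg).lowerSemicontinuous
    have h3 := (h1.add h2).isClosed_preimage 0
    have h4 : {p : E × ℝ | φ p.1 ≤ p.2}
        = (fun p : E × ℝ => φ p.1 + -p.2) ⁻¹' Set.Iic 0 := by
      ext p
      simp [← sub_eq_add_neg, sub_nonpos]
    rw [h4]
    exact h3
  have hepi_cv : Convex ℝ {p : E × ℝ | φ p.1 ≤ p.2} := by
    have h := hconv.convex_epigraph
    simpa using h
  have hx : ((0 : E), φ 0 - 1) ∉ {p : E × ℝ | φ p.1 ≤ p.2} := by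
    simp only [Set.mem_setOf_eq, not_le]
    linarith
  obtain ⟨f, u, hfx, hf⟩ := geometric_hahn_banach_point_closed hepi_cv hepi_cl hx
  set c : ℝ := f ((0 : E), (1 : ℝ)) with hc
  set L1 : E →L[ℝ] ℝ := f.comp (ContinuousLinearMap.inl ℝ E ℝ) with hL1
  have hsplit : ∀ (w : E) (t : ℝ), f (w, t) = L1 w + t * c := by
    intro w t
    have h1 : (w, t) = ((w, (0:ℝ)) : E × ℝ) + t • (((0:E), (1:ℝ)) : E × ℝ) := by
      simp [Prod.ext_iff]
    rw [h1, map_add, map_smul]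
    simp [hL1, hc, ContinuousLinearMap.comp_apply, mul_comm]
  have hc_pos : 0 < c := by
    rcases lt_trichotomy c 0 with hcneg | hc0 | hcpos
    · set t0 : ℝ := max (φ 0) ((u - L1 0 - 1) / c) with ht0def
      have ht0 : ((0:E), t0) ∈ {p : E × ℝ | φ p.1 ≤ p.2} := by
        simp only [Set.mem_setOf_eq]
        exact le_max_left _ _
      have h1 := hf _ ht0
      rw [hsplit] at h1
      have h2 : (u - L1 0 - 1) / c ≤ t0 := le_max_right _ _
      have h3 : t0 * c ≤ u - L1 0 - 1 := by
        have := mul_le_mul_of_nonpos_right h2 hcneg.le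
        rwa [div_mul_cancel₀ _ (ne_of_lt hcneg)] at this
      linarith
    · exfalso
      have h1 := hf ((0:E), φ 0) (by simp)
      rw [hsplit] at h1 hfx
      rw [hc0] at h1 hfx
      simp at h1 hfx
      linarith
    · exact hcpos
  refine ⟨(-(c⁻¹)) • L1, u / c, fun w => ?_⟩
  have hw := hf (w, φ w) (by simp)
  rw [hsplit] at hw
  have h2 : u / c < (L1 w + φ w * c) / c := by
    rw [div_lt_div_iff_of_pos_right hc_pos]
    exact hw
  have h3 : (L1 w + φ w * c) / c = L1 w / c + φ w := by
    field_simp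
  rw [h3] at h2
  have h4 : ((-(c⁻¹)) • L1) w = -(L1 w / c) := by
    simp [ContinuousLinearMap.smul_apply, div_eq_inv_mul]
  rw [h4]
  linarith

end aux

lemma aux_const_sub_iSup {ι : Type*} [Nonempty ι] (c : ℝ) (f : ι → ℝ)
    (hb : BddAbove (Set.range f)) :
    ⨅ i, (c - f i) = c - ⨆ i, f i := by
  obtain ⟨M, hM⟩ := hb
  have hbb : BddBelow (Set.range fun i => c - f i) := by
    refine ⟨c - M, ?_⟩
    rintro x ⟨i, rfl⟩
    have := hM ⟨i, rfl⟩
    simp only at this ⊢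
    linarith [hM (Set.mem_range_self i)]
  apply le_antisymm
  · have h1 : ∀ i, f i ≤ c - ⨅ i, (c - f i) := fun i => by
      have h2 := ciInf_le hbb i
      linarith
    have h2 : (⨆ i, f i) ≤ c - ⨅ i, (c - f i) := ciSup_le h1
    linarith
  · refine le_ciInf fun i => ?_
    have h1 : f i ≤ ⨆ i, f i := le_ciSup ⟨M, hM⟩ i
    linarith

/-- Moreau envelope of `f` with parameter `α`. -/
noncomputable def moreauEnv {E : Type*} [NormedAddCommGroup E]
    (α : ℝ) (f : E → ℝ) (x : E) : ℝ :=
  ⨅ w : E, f w + (1 / (2 * α)) * ‖w - x‖ ^ 2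

theorem stmt_9 {n d : ℕ} (φ : EuclideanSpace ℝ (Fin n) → ℝ)
    (hconv : ConvexOn ℝ Set.univ φ) (hlsc : LowerSemicontinuous φ)
    (lam α : ℝ) (hlam : 0 < lam) (hα : 0 < α)
    (z : EuclideanSpace ℝ (Fin d))
    (B : EuclideanSpace ℝ (Fin d) →L[ℝ] EuclideanSpace ℝ (Fin n)) :
    (lam < α / ‖B‖ ^ 2 →
      StrictConvexOn ℝ Set.univ
        (fun x => (1 / (2 * lam)) * ‖x - z‖ ^ 2 - moreauEnv α φ (B x))) ∧
    (lam = α / ‖B‖ ^ 2 →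
      ConvexOn ℝ Set.univ
        (fun x => (1 / (2 * lam)) * ‖x - z‖ ^ 2 - moreauEnv α φ (B x))) := by
  have hE : Nonempty (EuclideanSpace ℝ (Fin n)) := inferInstance
  obtain ⟨L, c0, hmin⟩ := aux_affine_minorant φ hconv hlsc
  have h2α : (0:ℝ) < 2 * α := by linarith
  -- the integrand of the dual sup representation
  set ψ : EuclideanSpace ℝ (Fin n) → EuclideanSpace ℝ (Fin n) → ℝ := fun u w => (⟪w, u⟫ : ℝ) / α - φ w - ‖w‖ ^ 2 / (2 * α) with hψ
  -- pointwise upper bound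
  have hbdd : ∀ u : EuclideanSpace ℝ (Fin n), BddAbove (Set.range (ψ u)) := by
    intro u
    refine ⟨(‖u‖ + α * ‖L‖) ^ 2 / α + |c0|, ?_⟩
    rintro x ⟨w, rfl⟩
    have h1 : (⟪w, u⟫ : ℝ) ≤ ‖w‖ * ‖u‖ := real_inner_le_norm w u
    have h2 : L w + c0 ≤ φ w := hmin w
    have h3 : -(‖L‖ * ‖w‖) ≤ L w := by
      have := L.le_opNorm w
      have habs : |L w| ≤ ‖L‖ * ‖w‖ := by simpa using this
      linarith [(abs_le.mp habs).1]
    have key : 2 * (⟪w, u⟫ : ℝ) - 2 * α * φ w - ‖w‖ ^ 2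
        ≤ 2 * α * ((‖u‖ + α * ‖L‖) ^ 2 / α + |c0|) := by
      have hr : 2 * α * ((‖u‖ + α * ‖L‖) ^ 2 / α + |c0|)
          = 2 * (‖u‖ + α * ‖L‖) ^ 2 + 2 * α * |c0| := by
        field_simp
      rw [hr]
      nlinarith [sq_nonneg (‖w‖ - (‖u‖ + α * ‖L‖)), norm_nonneg w, neg_abs_le c0,
        hα, h1, h2, h3, norm_nonneg u, norm_nonneg L,
        mul_nonneg hα.le (norm_nonneg w)]
    have heq : ψ u w = (2 * (⟪w, u⟫ : ℝ) - 2 * α * φ w - ‖w‖ ^ 2) / (2 * α) := by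
      rw [hψ]
      field_simp
    rw [heq]
    rw [div_le_iff₀ h2α]
    nlinarith [key]
  -- the envelope identity
  have henv : ∀ u : EuclideanSpace ℝ (Fin n), moreauEnv α φ u = ‖u‖ ^ 2 / (2 * α) - ⨆ w, ψ u w := by
    intro u
    have hpt : ∀ w : EuclideanSpace ℝ (Fin n), φ w + (1 / (2 * α)) * ‖w - u‖ ^ 2
        = ‖u‖ ^ 2 / (2 * α) - ψ u w := by
      intro w
      have hns : ‖w - u‖ ^ 2 = ‖w‖ ^ 2 - 2 * (⟪w, u⟫ : ℝ) + ‖u‖ ^ 2 :=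
        norm_sub_sq_real w u
      rw [hψ, hns]
      field_simp
      ring
    rw [moreauEnv]
    simp_rw [hpt]
    exact aux_const_sub_iSup _ _ (hbdd u)
  -- convexity of the sup part composed with B
  have hG : ConvexOn ℝ Set.univ (fun x : EuclideanSpace ℝ (Fin d) => ⨆ w, ψ (B x) w) := by
    refine ⟨convex_univ, fun x _ y _ a b ha hb hab => ?_⟩
    have hxyw : ∀ w : EuclideanSpace ℝ (Fin n), ψ (B (a • x + b • y)) w = a * ψ (B x) w + b * ψ (B y) w := by
      intro w
      have hlin : (⟪w, B (a • x + b • y)⟫ : ℝ)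
          = a * (⟪w, B x⟫ : ℝ) + b * (⟪w, B y⟫ : ℝ) := by
        rw [map_add, map_smul, map_smul, inner_add_right,
          real_inner_smul_right, real_inner_smul_right]
      rw [hψ]
      simp only
      rw [hlin]
      linear_combination (φ w + ‖w‖ ^ 2 / (2 * α)) * hab
    simp only [hxyw]
    refine ciSup_le fun w => ?_
    have h1 : ψ (B x) w ≤ ⨆ w, ψ (B x) w := le_ciSup (hbdd (B x)) w
    have h2 : ψ (B y) w ≤ ⨆ w, ψ (B y) w := le_ciSup (hbdd (B y)) w
    have := add_le_add (mul_le_mul_of_nonneg_left h1 ha) (mul_le_mul_of_nonneg_left h2 hb)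
    simpa using this
  -- the quadratic combination identity
  have hq_combo : ∀ (x y : EuclideanSpace ℝ (Fin d)) (t s : ℝ), t + s = 1 →
      (1 / (2 * lam)) * ‖(t • x + s • y) - z‖ ^ 2 - (1 / (2 * α)) * ‖B (t • x + s • y)‖ ^ 2
      = t * ((1 / (2 * lam)) * ‖x - z‖ ^ 2 - (1 / (2 * α)) * ‖B x‖ ^ 2)
        + s * ((1 / (2 * lam)) * ‖y - z‖ ^ 2 - (1 / (2 * α)) * ‖B y‖ ^ 2)
        - t * s * ((1 / (2 * lam)) * ‖x - y‖ ^ 2 - (1 / (2 * α)) * ‖B x - B y‖ ^ 2) := by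
    intro x y t s hts
    have h1 : (t • x + s • y) - z = t • (x - z) + s • (y - z) := by
      rw [smul_sub, smul_sub]
      rw [show t • x - t • z + (s • y - s • z) = t • x + s • y - (t • z + s • z) by abel,
        ← add_smul, hts, one_smul]
    have h2 : B (t • x + s • y) = t • (B x) + s • (B y) := by
      rw [map_add, map_smul, map_smul]
    rw [h1, h2, aux_combo t s hts, aux_combo t s hts,
      show x - z - (y - z) = x - y by abel]
    ring
  -- rewriting the objective
  have hFeq : (fun x : EuclideanSpace ℝ (Fin d) => (1 / (2 * lam)) * ‖x - z‖ ^ 2 - moreauEnv α φ (B x))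
      = fun x : EuclideanSpace ℝ (Fin d) => ((1 / (2 * lam)) * ‖x - z‖ ^ 2 - (1 / (2 * α)) * ‖B x‖ ^ 2)
          + ⨆ w, ψ (B x) w := by
    funext x
    rw [henv (B x)]
    ring
  constructor
  · -- strict case
    intro hlt
    have hB : 0 < ‖B‖ := by
      rcases eq_or_lt_of_le (norm_nonneg B) with hB0 | hB0
      · exfalso
        rw [← hB0] at hlt
        norm_num [div_zero] at hlt
        linarith
      · exact hB0
    have hkey : lam * ‖B‖ ^ 2 < α := by
      rw [lt_div_iff₀ (by positivity)] at hlt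
      exact hlt
    rw [hFeq]
    refine ⟨convex_univ, fun x _ y _ hxy a b ha hb hab => ?_⟩
    have hGc := hG.2 (Set.mem_univ x) (Set.mem_univ y) ha.le hb.le hab
    simp only at hGc
    have hqc := hq_combo x y a b hab
    have hxy0 : 0 < ‖x - y‖ := by
      rw [norm_pos_iff]
      exact sub_ne_zero.mpr hxy
    have hBxy : ‖B x - B y‖ ≤ ‖B‖ * ‖x - y‖ := by
      rw [← map_sub]
      exact B.le_opNorm _
    have hr_pos : 0 < (1 / (2 * lam)) * ‖x - y‖ ^ 2 - (1 / (2 * α)) * ‖B x - B y‖ ^ 2 := by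
      have hsq : ‖B x - B y‖ ^ 2 ≤ (‖B‖ * ‖x - y‖) ^ 2 :=
        pow_le_pow_left₀ (norm_nonneg _) hBxy 2
      have hrexp : (1 / (2 * lam)) * ‖x - y‖ ^ 2 - (1 / (2 * α)) * ‖B x - B y‖ ^ 2
          = (α * ‖x - y‖ ^ 2 - lam * ‖B x - B y‖ ^ 2) / (2 * lam * α) := by
        field_simp
      rw [hrexp]
      apply div_pos _ (by positivity)
      nlinarith [mul_pos (sub_pos.mpr hkey) (pow_pos hxy0 2),
        mul_le_mul_of_nonneg_left hsq hlam.le]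
    have habr : 0 < a * b * ((1 / (2 * lam)) * ‖x - y‖ ^ 2
        - (1 / (2 * α)) * ‖B x - B y‖ ^ 2) := by positivity
    simp only [smul_eq_mul] at hGc ⊢
    rw [hqc]
    have h5 : a * ((1 / (2 * lam)) * ‖x - z‖ ^ 2 - (1 / (2 * α)) * ‖B x‖ ^ 2 + ⨆ w, ψ (B x) w)
        + b * ((1 / (2 * lam)) * ‖y - z‖ ^ 2 - (1 / (2 * α)) * ‖B y‖ ^ 2 + ⨆ w, ψ (B y) w)
        = (a * ((1 / (2 * lam)) * ‖x - z‖ ^ 2 - (1 / (2 * α)) * ‖B x‖ ^ 2)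
            + b * ((1 / (2 * lam)) * ‖y - z‖ ^ 2 - (1 / (2 * α)) * ‖B y‖ ^ 2))
          + (a * (⨆ w, ψ (B x) w) + b * (⨆ w, ψ (B y) w)) := by ring
    rw [h5]
    linarith [hGc, habr]
  · -- equality case
    intro heq
    have hB : 0 < ‖B‖ := by
      rcases eq_or_lt_of_le (norm_nonneg B) with hB0 | hB0
      · exfalso
        rw [← hB0] at heq
        norm_num [div_zero] at heq
        linarith
      · exact hB0
    have hkey : lam * ‖B‖ ^ 2 = α := by
      rw [heq, div_mul_cancel₀]
      positivity
    rw [hFeq]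
    refine ⟨convex_univ, fun x _ y _ a b ha hb hab => ?_⟩
    have hGc := hG.2 (Set.mem_univ x) (Set.mem_univ y) ha hb hab
    simp only at hGc
    have hqc := hq_combo x y a b hab
    have hBxy : ‖B x - B y‖ ≤ ‖B‖ * ‖x - y‖ := by
      rw [← map_sub]
      exact B.le_opNorm _
    have hr_nonneg : 0 ≤ (1 / (2 * lam)) * ‖x - y‖ ^ 2
        - (1 / (2 * α)) * ‖B x - B y‖ ^ 2 := by
      have hsq : ‖B x - B y‖ ^ 2 ≤ (‖B‖ * ‖x - y‖) ^ 2 :=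
        pow_le_pow_left₀ (norm_nonneg _) hBxy 2
      have hrexp : (1 / (2 * lam)) * ‖x - y‖ ^ 2 - (1 / (2 * α)) * ‖B x - B y‖ ^ 2
          = (α * ‖x - y‖ ^ 2 - lam * ‖B x - B y‖ ^ 2) / (2 * lam * α) := by
        field_simp
      rw [hrexp]
      apply div_nonneg _ (by positivity)
      nlinarith [mul_le_mul_of_nonneg_left hsq hlam.le, sq_nonneg ‖x - y‖]
    have habr : 0 ≤ a * b * ((1 / (2 * lam)) * ‖x - y‖ ^ 2
        - (1 / (2 * α)) * ‖B x - B y‖ ^ 2) := by positivity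
    simp only [smul_eq_mul] at hGc ⊢
    rw [hqc]
    have h5 : a * ((1 / (2 * lam)) * ‖x - z‖ ^ 2 - (1 / (2 * α)) * ‖B x‖ ^ 2 + ⨆ w, ψ (B x) w)
        + b * ((1 / (2 * lam)) * ‖y - z‖ ^ 2 - (1 / (2 * α)) * ‖B y‖ ^ 2 + ⨆ w, ψ (B y) w)
        = (a * ((1 / (2 * lam)) * ‖x - z‖ ^ 2 - (1 / (2 * α)) * ‖B x‖ ^ 2)
            + b * ((1 / (2 * lam)) * ‖y - z‖ ^ 2 - (1 / (2 * α)) * ‖B y‖ ^ 2))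
          + (a * (⨆ w, ψ (B x) w) + b * (⨆ w, ψ (B y) w)) := by ring
    rw [h5]
    linarith [hGc, habr]
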